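/- Under the assumptions of Theorem 1 (big-M bound L on all pre-activations for all binary inputs), the optimal value of max over feasible allocations a ∈ F of Σ_i N_i(a_i) (where each N_i is a ReLU network and F = {a ∈ ({0,1}^m)^n : Σ_i a_{ij} ≤ 1 ∀j}) equals the optimal value of the MIP maximizing Σ_i z^{i,K_i} subject to z^{i,0} = a_i, the layer-wise big-M constraints for each bidder i and layer k, binarity of a and y, and the feasibility constraints Σ_i a_{ij} ≤ 1. -/
import Mathlib


/-- Layer dimensions of a bidder's network: the input layer has `m` nodes. -/
def dims (m : ℕ) (d : ℕ → ℕ) : ℕ → ℕ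
  | 0 => m
  | k + 1 => d (k + 1)

/-- Output of layer `k` of a ReLU network (`layerOut ... 0 = x` is the input). -/
noncomputable def layerOut (d : ℕ → ℕ)
    (W : (k : ℕ) → Matrix (Fin (d (k + 1))) (Fin (d k)) ℝ)
    (b : (k : ℕ) → Fin (d (k + 1)) → ℝ) (x : Fin (d 0) → ℝ) :
    (k : ℕ) → Fin (d k) → ℝ
  | 0 => x
  | k + 1 => fun j => max 0 (((W k).mulVec (layerOut d W b x k) + b k) j)

theorem dnn_wdp_mip_equivalence (n m : ℕ) (K : Fin n → ℕ)
    (d : Fin n → ℕ → ℕ)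
    (W : (i : Fin n) → (k : ℕ) →
      Matrix (Fin (dims m (d i) (k + 1))) (Fin (dims m (d i) k)) ℝ)
    (b : (i : Fin n) → (k : ℕ) → Fin (dims m (d i) (k + 1)) → ℝ)
    (L : ℝ)
    (hL : ∀ i : Fin n, ∀ x : Fin m → ℝ, (∀ j, x j = 0 ∨ x j = 1) →
      ∀ k < K i, ∀ j,
        |((W i k).mulVec (layerOut (dims m (d i)) (W i) (b i) x k) + b i k) j| ≤ L) :
    sSup {r : ℝ | ∃ a : Fin n → Fin m → ℝ,
        (∀ i j, a i j = 0 ∨ a i j = 1) ∧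
        (∀ j, ∑ i, a i j ≤ 1) ∧
        r = ∑ i, ∑ j, layerOut (dims m (d i)) (W i) (b i) (a i) (K i) j} =
    sSup {r : ℝ | ∃ (a : Fin n → Fin m → ℝ)
        (z s y : (i : Fin n) → (k : ℕ) → Fin (dims m (d i) k) → ℝ),
        (∀ i j, a i j = 0 ∨ a i j = 1) ∧
        (∀ j, ∑ i, a i j ≤ 1) ∧
        (∀ i, z i 0 = a i) ∧
        (∀ i, ∀ k < K i, ∀ j, y i (k + 1) j = 0 ∨ y i (k + 1) j = 1) ∧
        (∀ i, ∀ k < K i, ∀ j, z i (k + 1) j - s i (k + 1) j =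
            ((W i k).mulVec (z i k) + b i k) j) ∧
        (∀ i, ∀ k < K i, ∀ j,
            0 ≤ z i (k + 1) j ∧ z i (k + 1) j ≤ y i (k + 1) j * L) ∧
        (∀ i, ∀ k < K i, ∀ j,
            0 ≤ s i (k + 1) j ∧ s i (k + 1) j ≤ (1 - y i (k + 1) j) * L) ∧
        r = ∑ i, ∑ j, z i (K i) j} := by
  congr 1
  ext r
  constructor
  · rintro ⟨a, ha, hfeas, rfl⟩
    refine ⟨a, fun i k => layerOut (dims m (d i)) (W i) (b i) (a i) k,
      fun i k => match k with
        | 0 => fun _ => 0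
        | k + 1 => fun j => max 0
            (-(((W i k).mulVec (layerOut (dims m (d i)) (W i) (b i) (a i) k) + b i k) j)),
      fun i k => match k with
        | 0 => fun _ => 0
        | k + 1 => fun j => if 0 ≤ ((W i k).mulVec
            (layerOut (dims m (d i)) (W i) (b i) (a i) k) + b i k) j then 1 else 0,
      ha, hfeas, fun i => rfl, ?_, ?_, ?_, ?_, rfl⟩
    · intro i k hk j
      dsimp only
      split <;> simp
    · intro i k hk j
      dsimp only
      show max 0 _ - max 0 _ = _
      rcases le_total 0 (((W i k).mulVec (layerOut (dims m (d i)) (W i) (b i) (a i) k)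
          + b i k) j) with h | h
      · rw [max_eq_right h, max_eq_left (by linarith)]; ring
      · rw [max_eq_left h, max_eq_right (by linarith)]; ring
    · intro i k hk j
      have hb := hL i (a i) (ha i) k hk j
      have hb1 := abs_le.mp hb
      refine ⟨le_max_left _ _, ?_⟩
      dsimp only
      show max 0 _ ≤ _
      split
      · rw [one_mul]
        exact max_le (by linarith [hb1.1, hb1.2]) hb1.2
      · rw [zero_mul]
        exact le_of_eq (max_eq_left (by linarith))
    · intro i k hk j
      have hb := hL i (a i) (ha i) k hk j
      have hb1 := abs_le.mp hb
      refine ⟨le_max_left _ _, ?_⟩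
      dsimp only
      split
      · rename_i h
        rw [max_eq_left (by linarith)]
        nlinarith [hb1.1, hb1.2]
      · rename_i h
        push_neg at h
        rw [max_eq_right (by linarith)]
        nlinarith [hb1.1, hb1.2]
  · rintro ⟨a, z, s, y, ha, hfeas, hz0, hy, heq, hzb, hsb, rfl⟩
    refine ⟨a, ha, hfeas, ?_⟩
    have key : ∀ i : Fin n, ∀ k, k ≤ K i →
        z i k = layerOut (dims m (d i)) (W i) (b i) (a i) k := by
      intro i k
      induction k with
      | zero => intro _; exact hz0 i
      | succ k ih =>
        intro hk
        have hk' : k < K i := Nat.lt_of_succ_le hk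
        have ihk := ih (le_of_lt hk')
        funext j
        have he := heq i k hk' j
        rw [ihk] at he
        set p := ((W i k).mulVec (layerOut (dims m (d i)) (W i) (b i) (a i) k) + b i k) j
          with hp
        show z i (k + 1) j = max 0 p
        obtain ⟨hz1, hz2⟩ := hzb i k hk' j
        obtain ⟨hs1, hs2⟩ := hsb i k hk' j
        rcases hy i k hk' j with h0 | h1
        · rw [h0, zero_mul] at hz2
          have hz : z i (k + 1) j = 0 := le_antisymm hz2 hz1
          rw [hz] at he ⊢
          have : p ≤ 0 := by linarith
          rw [max_eq_left this]
        · rw [h1] at hs2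
          simp at hs2
          have hs : s i (k + 1) j = 0 := le_antisymm hs2 hs1
          rw [hs] at he
          have : z i (k + 1) j = p := by linarith
          rw [this, max_eq_right (by linarith)]
    exact Finset.sum_congr rfl fun i _ => by rw [key i (K i) le_rfl]
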